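/- arXiv:1002.0549 — 4 statements merged into one kernel-verified Lean document; each statement's English description precedes it below -/
import Mathlib

section
/- Let f : X → X be a continuous map on a compact metric space, U a finite open cover, and n > 0. Then h_L^+(f, U) = h_L^+(f, f^{-n}(U)) = h_L^+(f, U_f^n), and similarly for h_L^-. -/
open Set Filter Topology Metric
open scoped ENNReal

/-- `U` is an open cover of `X`: a family of open sets whose union is `X`. -/
def IsOpenCover {X : Type*} [MetricSpace X] (U : Set (Set X)) : Prop :=
  (∀ A ∈ U, IsOpen A) ∧ ⋃₀ U = Set.univ

/-- The Lebesgue number of a cover `U`: the largest `δ` such that every open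
ball of radius `δ` is contained in some element of `U`. -/
noncomputable def leb {X : Type*} [MetricSpace X] (U : Set (Set X)) : ℝ≥0∞ :=
  sSup {δ : ℝ≥0∞ | ∀ x : X, ∃ A ∈ U, EMetric.ball x δ ⊆ A}

/-- The cover `{g⁻¹(A) : A ∈ U}`. -/
def preCov {X : Type*} (g : X → X) (U : Set (Set X)) : Set (Set X) :=
  (fun A => g ⁻¹' A) '' U

/-- The join `U ∨ V = {A ∩ B : A ∈ U, B ∈ V}` of two covers. -/
def covJoin {X : Type*} (U V : Set (Set X)) : Set (Set X) :=
  {S | ∃ A ∈ U, ∃ B ∈ V, S = A ∩ B}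

/-- The cover `U_f^n = ⋁_{k=0}^{n-1} f^{-k}(U)`. -/
def covSeq {X : Type*} (f : X → X) (U : Set (Set X)) (n : ℕ) : Set (Set X) :=
  {S | ∃ g : Fin n → Set X, (∀ k, g k ∈ U) ∧ S = ⋂ k : Fin n, (f^[(k : ℕ)]) ⁻¹' g k}

/-- `δ_n(f,U)`, the Lebesgue number of `U_f^n`. -/
noncomputable def lebN {X : Type*} [MetricSpace X] (f : X → X) (U : Set (Set X)) (n : ℕ) : ℝ≥0∞ :=
  leb (covSeq f U n)

/-- `h_L^+(f,U) = limsup_n -(1/n) log δ_n(f,U)`. -/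
noncomputable def hLplus {X : Type*} [MetricSpace X] (f : X → X) (U : Set (Set X)) : EReal :=
  Filter.limsup (fun n : ℕ => ((-Real.log ((lebN f U n).toReal) / n : ℝ) : EReal)) atTop

/-- `h_L^-(f,U) = liminf_n -(1/n) log δ_n(f,U)`. -/
noncomputable def hLminus {X : Type*} [MetricSpace X] (f : X → X) (U : Set (Set X)) : EReal :=
  Filter.liminf (fun n : ℕ => ((-Real.log ((lebN f U n).toReal) / n : ℝ) : EReal)) atTop

/-- `h_L^+(f)`: supremum over finite open covers. -/
noncomputable def hLplusSup {X : Type*} [MetricSpace X] (f : X → X) : EReal :=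
  ⨆ (U : Set (Set X)) (_ : IsOpenCover U ∧ U.Finite), hLplus f U

/-- `h_L^-(f)`: supremum over finite open covers. -/
noncomputable def hLminusSup {X : Type*} [MetricSpace X] (f : X → X) : EReal :=
  ⨆ (U : Set (Set X)) (_ : IsOpenCover U ∧ U.Finite), hLminus f U

/-- The diameter of a cover: supremum of diameters of its elements. -/
noncomputable def covDiam {X : Type*} [MetricSpace X] (U : Set (Set X)) : ℝ≥0∞ :=
  ⨆ A ∈ U, EMetric.diam A

/-- `U` refines `V`: every element of `U` is contained in some element of `V`. -/
def Refines {X : Type*} (U V : Set (Set X)) : Prop :=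
  ∀ A ∈ U, ∃ B ∈ V, A ⊆ B

/-- `N(γ)`: the minimal number of open `γ`-balls needed to cover `X`. -/
noncomputable def covN (X : Type*) [MetricSpace X] (γ : ℝ≥0∞) : ℕ :=
  sInf {n : ℕ | ∃ s : Finset X, s.card = n ∧ ⋃ x ∈ s, EMetric.ball x γ = Set.univ}

/-- `S(U)`: the smallest cardinality of a subcover of `U`. -/
noncomputable def covS {X : Type*} [MetricSpace X] (U : Set (Set X)) : ℕ :=
  sInf {m : ℕ | ∃ W ⊆ U, ⋃₀ W = Set.univ ∧ W.ncard = m}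

/-- `s_n(f,ε)`: maximal cardinality of an `(n,ε)`-separated set. -/
noncomputable def sep {X : Type*} [MetricSpace X] (f : X → X) (n : ℕ) (ε : ℝ) : ℕ :=
  sSup {m : ℕ | ∃ E : Finset X, E.card = m ∧
    ∀ x ∈ E, ∀ y ∈ E, x ≠ y → ∃ k < n, ε < dist (f^[k] x) (f^[k] y)}

/-- Topological entropy via `(n,ε)`-separated sets. -/
noncomputable def topEnt {X : Type*} [MetricSpace X] (f : X → X) : EReal :=
  ⨆ (ε : ℝ) (_ : 0 < ε),
    Filter.limsup (fun n : ℕ => ((Real.log (sep f n ε) / n : ℝ) : EReal)) atTop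

/-- Upper box dimension of `X`. -/
noncomputable def dimB (X : Type*) [MetricSpace X] : EReal :=
  Filter.limsup
    (fun γ : ℝ => ((Real.log (covN X (ENNReal.ofReal γ)) / -Real.log γ : ℝ) : EReal))
    (nhdsWithin (0:ℝ) (Set.Ioi 0))
set_option linter.unusedSectionVars false

section Aux

variable {X : Type*} [MetricSpace X]

lemma leb_set_down {U : Set (Set X)} {δ δ' : ℝ≥0∞} (h : δ' ≤ δ)
    (hδ : ∀ x : X, ∃ A ∈ U, EMetric.ball x δ ⊆ A) :
    ∀ x : X, ∃ A ∈ U, EMetric.ball x δ' ⊆ A := fun x => by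
  obtain ⟨A, hA, hb⟩ := hδ x
  exact ⟨A, hA, (EMetric.ball_subset_ball h).trans hb⟩

lemma leb_le_of_refines {U V : Set (Set X)} (h : Refines U V) : leb U ≤ leb V := by
  apply sSup_le_sSup
  intro δ hδ x
  obtain ⟨A, hA, hb⟩ := hδ x
  obtain ⟨B, hB, hAB⟩ := h A hA
  exact ⟨B, hB, hb.trans hAB⟩

lemma leb_le_of_subset {U V : Set (Set X)} (h : U ⊆ V) : leb U ≤ leb V :=
  leb_le_of_refines (fun A hA => ⟨A, h hA, subset_rfl⟩)

lemma leb_pos [CompactSpace X] {U : Set (Set X)} (hU : IsOpenCover U) : 0 < leb U := by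
  obtain ⟨δ, hδ, h⟩ := lebesgue_number_lemma_of_metric_sUnion (isCompact_univ (X := X))
    hU.1 (by rw [hU.2])
  have hmem : ENNReal.ofReal δ ∈ {δ : ℝ≥0∞ | ∀ x : X, ∃ A ∈ U, EMetric.ball x δ ⊆ A} := by
    intro x
    obtain ⟨t, ht, hb⟩ := h x (mem_univ x)
    exact ⟨t, ht, fun y hy => hb (by
      change edist y x < _ at hy
      rw [edist_dist, ENNReal.ofReal_lt_ofReal_iff hδ] at hy
      exact hy)⟩
  calc (0 : ℝ≥0∞) < ENNReal.ofReal δ := by simp [hδ]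
    _ ≤ leb U := le_sSup hmem

lemma covSeq_isOpenCover [CompactSpace X] {f : X → X} (hf : Continuous f)
    {U : Set (Set X)} (hU : IsOpenCover U) (m : ℕ) : IsOpenCover (covSeq f U m) := by
  constructor
  · rintro A ⟨g, hg, rfl⟩
    exact isOpen_iInter_of_finite fun k =>
      (hU.1 _ (hg k)).preimage (hf.iterate _)
  · apply eq_univ_of_forall
    intro x
    have hx : ∀ k : Fin m, ∃ A ∈ U, f^[(k : ℕ)] x ∈ A := by
      intro k
      have : f^[(k : ℕ)] x ∈ ⋃₀ U := by rw [hU.2]; trivial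
      simpa [mem_sUnion] using this
    choose g hg hmem using hx
    exact ⟨⋂ k : Fin m, (f^[(k : ℕ)]) ⁻¹' g k, ⟨g, hg, rfl⟩, by simpa using hmem⟩

lemma lebN_antitone (f : X → X) (U : Set (Set X)) : Antitone (lebN f U) := by
  apply antitone_nat_of_succ_le
  intro m
  apply leb_le_of_refines
  rintro A ⟨g, hg, rfl⟩
  refine ⟨⋂ k : Fin m, (f^[(k : ℕ)]) ⁻¹' (g k.castSucc), ⟨fun k => g k.castSucc, fun k => hg _, rfl⟩, ?_⟩
  intro x hx
  simp only [mem_iInter, mem_preimage] at hx ⊢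
  intro k
  exact hx k.castSucc

lemma iter_comm (f : X → X) (a b : ℕ) (x : X) : f^[a] (f^[b] x) = f^[b] (f^[a] x) := by
  rw [← Function.iterate_add_apply, ← Function.iterate_add_apply, Nat.add_comm]

lemma covSeq_preCov (f : X → X) (U : Set (Set X)) (n m : ℕ) :
    covSeq f (preCov (f^[n]) U) m = preCov (f^[n]) (covSeq f U m) := by
  ext S
  constructor
  · rintro ⟨g, hg, rfl⟩
    choose h hh hgh using hg
    refine ⟨⋂ k : Fin m, (f^[(k : ℕ)]) ⁻¹' h k, ⟨h, hh, rfl⟩, ?_⟩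
    ext x
    simp only [mem_preimage, mem_iInter]
    constructor
    · intro hx k
      rw [← hgh k]
      simp only [mem_preimage]
      rw [iter_comm f n (k : ℕ) x]
      exact hx k
    · intro hx k
      have := hx k
      rw [← hgh k] at this
      simp only [mem_preimage] at this
      rw [iter_comm f n (k : ℕ) x] at this
      exact this
  · rintro ⟨T, ⟨h, hh, rfl⟩, rfl⟩
    refine ⟨fun k => (f^[n]) ⁻¹' (h k), fun k => ⟨h k, hh k, rfl⟩, ?_⟩
    ext x
    simp only [mem_preimage, mem_iInter]
    constructor
    · intro hx k
      have := hx k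
      rwa [iter_comm f (k : ℕ) n x] at this
    · intro hx k
      have := hx k
      rwa [iter_comm f n (k : ℕ) x] at this

lemma lebN_add_le_preCov (f : X → X) (U : Set (Set X)) (n m : ℕ) :
    lebN f U (n + m) ≤ leb (preCov (f^[n]) (covSeq f U m)) := by
  apply leb_le_of_refines
  rintro A ⟨g, hg, rfl⟩
  refine ⟨(f^[n]) ⁻¹' (⋂ j : Fin m, (f^[(j : ℕ)]) ⁻¹' g ⟨n + j, by omega⟩),
    ⟨_, ⟨fun j => g ⟨n + j, by omega⟩, fun j => hg _, rfl⟩, rfl⟩, ?_⟩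
  intro x hx
  simp only [mem_iInter, mem_preimage] at hx ⊢
  intro j
  rw [← Function.iterate_add_apply]
  have := hx ⟨n + j, by omega⟩
  simpa [Nat.add_comm] using this

lemma min_le_lebN_add [CompactSpace X] (f : X → X) (U : Set (Set X)) (n m : ℕ) :
    min (lebN f U n) (leb (preCov (f^[n]) (covSeq f U m))) ≤ lebN f U (n + m) := by
  by_contra hcon
  push_neg at hcon
  obtain ⟨δ, hδ1, hδ2⟩ := exists_between hcon
  have h1 : δ ∈ {δ : ℝ≥0∞ | ∀ x : X, ∃ A ∈ covSeq f U n, EMetric.ball x δ ⊆ A} := by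
    obtain ⟨δ1, hδ1m, hlt⟩ := (lt_sSup_iff).mp (lt_of_lt_of_le hδ2 (min_le_left _ _))
    exact leb_set_down hlt.le hδ1m
  have h2 : δ ∈ {δ : ℝ≥0∞ | ∀ x : X, ∃ A ∈ preCov (f^[n]) (covSeq f U m), EMetric.ball x δ ⊆ A} := by
    obtain ⟨δ1, hδ1m, hlt⟩ := (lt_sSup_iff).mp (lt_of_lt_of_le hδ2 (min_le_right _ _))
    exact leb_set_down hlt.le hδ1m
  have h3 : δ ∈ {δ : ℝ≥0∞ | ∀ x : X, ∃ A ∈ covSeq f U (n + m), EMetric.ball x δ ⊆ A} := by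
    intro x
    obtain ⟨A, ⟨g, hg, rfl⟩, hA⟩ := h1 x
    obtain ⟨B, ⟨T, ⟨h, hh, rfl⟩, rfl⟩, hB⟩ := h2 x
    classical
    refine ⟨⋂ i : Fin (n + m), (f^[(i : ℕ)]) ⁻¹' (fun i : Fin (n + m) =>
      if hi : (i : ℕ) < n then g ⟨i, hi⟩ else h ⟨(i : ℕ) - n, by omega⟩) i,
      ⟨_, fun i => by dsimp only; split <;> [exact hg _; exact hh _], rfl⟩, ?_⟩
    intro y hy
    simp only [mem_iInter, mem_preimage]
    intro i
    split
    · next hi =>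
      have := hA hy
      simp only [mem_iInter, mem_preimage] at this
      exact this ⟨i, hi⟩
    · next hi =>
      have := hB hy
      simp only [mem_preimage, mem_iInter] at this
      have h2 := this ⟨(i : ℕ) - n, by omega⟩
      rw [← Function.iterate_add_apply] at h2
      have : (i : ℕ) - n + n = (i : ℕ) := by omega
      rwa [this] at h2
  have : δ ≤ lebN f U (n + m) := le_sSup h3
  exact absurd (lt_of_le_of_lt this hδ1) (lt_irrefl _)

lemma lebN_covSeq_eq (f : X → X) (U : Set (Set X)) {n : ℕ} (hn : 0 < n) (m : ℕ) :
    lebN f (covSeq f U n) (m + 1) = lebN f U (m + n) := by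
  apply le_antisymm
  · -- refines direction
    apply leb_le_of_refines
    rintro A ⟨G, hG, rfl⟩
    choose h hh hGh using hG
    refine ⟨⋂ i : Fin (m + n), (f^[(i : ℕ)]) ⁻¹'
      (fun i : Fin (m + n) => h ⟨min (i : ℕ) m, by omega⟩ ⟨(i : ℕ) - min (i : ℕ) m, by omega⟩) i,
      ⟨_, fun i => hh _ _, rfl⟩, ?_⟩
    intro x hx
    simp only [mem_iInter, mem_preimage] at hx ⊢
    intro i
    have hjm : min (i : ℕ) m < m + 1 := by omega
    have hkn : (i : ℕ) - min (i : ℕ) m < n := by omega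
    have hGi := hx ⟨min (i : ℕ) m, hjm⟩
    rw [hGh ⟨min (i : ℕ) m, hjm⟩] at hGi
    simp only [mem_iInter, mem_preimage] at hGi
    have h3 : f^[(i : ℕ) - min (i : ℕ) m] (f^[min (i : ℕ) m] x) ∈
        h ⟨min (i : ℕ) m, hjm⟩ ⟨(i : ℕ) - min (i : ℕ) m, hkn⟩ := hGi ⟨(i : ℕ) - min (i : ℕ) m, hkn⟩
    rw [← Function.iterate_add_apply] at h3
    have e2 : (i : ℕ) - min (i : ℕ) m + min (i : ℕ) m = (i : ℕ) := by omega
    rw [e2] at h3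
    exact h3
  · -- subset direction
    apply leb_le_of_subset
    rintro A ⟨g, hg, rfl⟩
    refine ⟨fun j : Fin (m + 1) => ⋂ k : Fin n, (f^[(k : ℕ)]) ⁻¹' g ⟨(j : ℕ) + k, by omega⟩,
      fun j => ⟨fun k => g ⟨(j : ℕ) + k, by omega⟩, fun k => hg _, rfl⟩, ?_⟩
    ext x
    simp only [mem_iInter, mem_preimage]
    constructor
    · intro hx j k
      rw [← Function.iterate_add_apply]
      have := hx ⟨(j : ℕ) + k, by omega⟩
      simpa [Nat.add_comm] using this
    · intro hx i
      have hjm : min (i : ℕ) m < m + 1 := by omega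
      have hkn : (i : ℕ) - min (i : ℕ) m < n := by omega
      have h3 : f^[(i : ℕ) - min (i : ℕ) m] (f^[min (i : ℕ) m] x) ∈
          g ⟨min (i : ℕ) m + ((i : ℕ) - min (i : ℕ) m), by omega⟩ :=
        hx ⟨min (i : ℕ) m, hjm⟩ ⟨(i : ℕ) - min (i : ℕ) m, hkn⟩
      rw [← Function.iterate_add_apply] at h3
      have e2 : (i : ℕ) - min (i : ℕ) m + min (i : ℕ) m = (i : ℕ) := by omega
      rw [e2] at h3
      have e3 : (⟨min (i : ℕ) m + ((i : ℕ) - min (i : ℕ) m), by omega⟩ : Fin (m + n)) = i := by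
        apply Fin.ext
        show min (i : ℕ) m + ((i : ℕ) - min (i : ℕ) m) = (i : ℕ)
        omega
      rwa [e3] at h3

end Aux

section Analytic

lemma ereal_limsup_le_of_imp {x y : ℕ → ℝ}
    (H : ∀ r : ℝ, ∀ ε : ℝ, 0 < ε → ∀ᶠ m in atTop, x m ≤ r → y m ≤ r + ε) :
    limsup (fun m => ((y m : EReal))) atTop ≤ limsup (fun m => ((x m : EReal))) atTop := by
  by_contra hcon
  push_neg at hcon
  obtain ⟨r, hr1, hr2⟩ := EReal.exists_between_coe_real hcon
  obtain ⟨r', h1, h2⟩ := EReal.exists_between_coe_real hr1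
  have hrr : r' < r := by exact_mod_cast h2
  have hev : ∀ᶠ m in atTop, (x m : EReal) < (r' : EReal) := eventually_lt_of_limsup_lt h1
  have hev2 := H r' (r - r') (by linarith)
  have hle : ∀ᶠ m in atTop, (y m : EReal) ≤ (r : EReal) := by
    filter_upwards [hev, hev2] with m hm hm2
    have hxm : x m ≤ r' := le_of_lt (by exact_mod_cast hm)
    have hym : y m ≤ r := by have := hm2 hxm; linarith
    exact_mod_cast hym
  exact absurd (limsup_le_of_le (h := hle)) (not_le.mpr hr2)

lemma ereal_liminf_le_of_imp {x y : ℕ → ℝ}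
    (H : ∀ r : ℝ, ∀ ε : ℝ, 0 < ε → ∀ᶠ m in atTop, x m ≤ r → y m ≤ r + ε) :
    liminf (fun m => ((y m : EReal))) atTop ≤ liminf (fun m => ((x m : EReal))) atTop := by
  by_contra hcon
  push_neg at hcon
  obtain ⟨r, hr1, hr2⟩ := EReal.exists_between_coe_real hcon
  obtain ⟨r', h1, h2⟩ := EReal.exists_between_coe_real hr1
  have hrr : r' < r := by exact_mod_cast h2
  have hfreq : ∃ᶠ m in atTop, (x m : EReal) < (r' : EReal) := frequently_lt_of_liminf_lt (h := h1)
  have hev : ∀ᶠ m in atTop, (r : EReal) < (y m : EReal) := eventually_lt_of_lt_liminf hr2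
  have hev2 := H r' (r - r') (by linarith)
  obtain ⟨m, hm1, hm2, hm3⟩ := (hfreq.and_eventually (hev.and hev2)).exists
  have hxm : x m ≤ r' := le_of_lt (by exact_mod_cast hm1)
  have hy : y m ≤ r' + (r - r') := hm3 hxm
  have hry : (r : ℝ) < y m := by exact_mod_cast hm2
  linarith

lemma map_shift_eq (g : ℕ → EReal) (k : ℕ) :
    Filter.map (fun m : ℕ => g (m + k)) atTop = Filter.map g atTop := by
  conv_rhs => rw [← Filter.map_add_atTop_eq_nat k]
  rw [Filter.map_map]
  rfl

lemma ereal_limsup_shift (g : ℕ → EReal) (k : ℕ) :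
    limsup (fun m : ℕ => g (m + k)) atTop = limsup g atTop := by
  unfold Filter.limsup
  rw [map_shift_eq]

lemma ereal_liminf_shift (g : ℕ → EReal) (k : ℕ) :
    liminf (fun m : ℕ => g (m + k)) atTop = liminf g atTop := by
  unfold Filter.liminf
  rw [map_shift_eq]

lemma ereal_tendsto_div_zero {w : ℕ → ℝ} {K : ℝ} {m0 : ℕ} (h : ∀ m ≥ m0, |w m| ≤ K) :
    Tendsto (fun m : ℕ => ((w m / m : ℝ) : EReal)) atTop (𝓝 (0 : EReal)) := by
  have h1 : Tendsto (fun m : ℕ => (w m / m : ℝ)) atTop (𝓝 0) := by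
    refine squeeze_zero_norm' ?_ (tendsto_const_div_atTop_nhds_zero_nat K)
    filter_upwards [eventually_ge_atTop m0, eventually_ge_atTop 1] with m hm hm1
    have hmpos : (0:ℝ) < m := by exact_mod_cast hm1
    rw [Real.norm_eq_abs, abs_div, abs_of_pos hmpos]
    gcongr
    exact h m hm
  have h2 := (EReal.tendsto_coe (a := (0:ℝ))).mpr h1
  simpa using h2

lemma ereal_shift_div_eq (u : ℕ → ℝ) (k : ℕ) (C : ℝ) (m1 : ℕ)
    (hC : ∀ m ≥ m1, C ≤ u m) :
    (limsup (fun m : ℕ => ((u (m + k) / m : ℝ) : EReal)) atTop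
      = limsup (fun m : ℕ => ((u m / m : ℝ) : EReal)) atTop) ∧
    (liminf (fun m : ℕ => ((u (m + k) / m : ℝ) : EReal)) atTop
      = liminf (fun m : ℕ => ((u m / m : ℝ) : EReal)) atTop) := by
  set x : ℕ → ℝ := fun m => u (m + k) / ((m + k : ℕ) : ℝ) with hx
  set y : ℕ → ℝ := fun m => u (m + k) / (m : ℝ) with hy
  have hshift_ls : limsup (fun m : ℕ => ((x m : ℝ) : EReal)) atTop
      = limsup (fun m : ℕ => ((u m / m : ℝ) : EReal)) atTop :=
    ereal_limsup_shift (fun m : ℕ => ((u m / m : ℝ) : EReal)) k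
  have hshift_li : liminf (fun m : ℕ => ((x m : ℝ) : EReal)) atTop
      = liminf (fun m : ℕ => ((u m / m : ℝ) : EReal)) atTop :=
    ereal_liminf_shift (fun m : ℕ => ((u m / m : ℝ) : EReal)) k
  have H1 : ∀ r : ℝ, ∀ ε : ℝ, 0 < ε → ∀ᶠ m in atTop, x m ≤ r → y m ≤ r + ε := by
    intro r ε hε
    have hev : ∀ᶠ m : ℕ in atTop, |r| * k / m ≤ ε :=
      (tendsto_const_div_atTop_nhds_zero_nat (|r| * k)).eventually (eventually_le_nhds hε)
    filter_upwards [eventually_ge_atTop 1, hev] with m hm hbm hxr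
    have hM : (0:ℝ) < (m : ℝ) := by exact_mod_cast hm
    have hMk : (0:ℝ) < ((m + k : ℕ) : ℝ) := by positivity
    have hu1 : u (m + k) ≤ r * ((m + k : ℕ) : ℝ) := (div_le_iff₀ hMk).mp hxr
    have h5 : y m ≤ r * ((m + k : ℕ) : ℝ) / (m : ℝ) := by
      show u (m + k) / (m : ℝ) ≤ r * ((m + k : ℕ) : ℝ) / (m : ℝ)
      gcongr
    have hcast : ((m + k : ℕ) : ℝ) = (m : ℝ) + (k : ℝ) := by push_cast; ring
    have h6 : r * ((m + k : ℕ) : ℝ) / (m : ℝ) = r + r * k / m := by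
      rw [hcast]; field_simp
    have h7 : r * k / m ≤ |r| * k / m := by
      gcongr
      exact le_abs_self r
    linarith
  have H2 : ∀ r : ℝ, ∀ ε : ℝ, 0 < ε → ∀ᶠ m in atTop, y m ≤ r → x m ≤ r + ε := by
    intro r ε hε
    have hev : ∀ᶠ m : ℕ in atTop, |C| * k / m ≤ ε :=
      (tendsto_const_div_atTop_nhds_zero_nat (|C| * k)).eventually (eventually_le_nhds hε)
    filter_upwards [eventually_ge_atTop 1, eventually_ge_atTop m1, hev] with m hm hm1' hbm hyr
    have hM : (0:ℝ) < (m : ℝ) := by exact_mod_cast hm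
    have hMk : (0:ℝ) < ((m + k : ℕ) : ℝ) := by positivity
    have hMMk : (m : ℝ) ≤ ((m + k : ℕ) : ℝ) := by exact_mod_cast Nat.le_add_right m k
    have hCu : C ≤ u (m + k) := hC (m + k) (le_trans hm1' (Nat.le_add_right m k))
    have hnegu : -(u (m + k)) ≤ |C| := le_trans (neg_le_neg hCu) (neg_le_abs C)
    have e : x m = y m + (-(u (m + k))) * ((m + k : ℕ) - (m : ℝ)) / ((m : ℝ) * ((m + k : ℕ) : ℝ)) := by
      rw [hx, hy]
      field_simp
      ring
    have hd1 : (0:ℝ) ≤ ((m + k : ℕ) : ℝ) - (m : ℝ) := by linarith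
    have h8 : (-(u (m + k))) * (((m + k : ℕ) : ℝ) - (m : ℝ)) ≤ |C| * k := by
      have hk : ((m + k : ℕ) : ℝ) - (m : ℝ) = (k : ℝ) := by push_cast; ring
      rw [hk]
      apply mul_le_mul_of_nonneg_right hnegu (by positivity)
    have h9 : (-(u (m + k))) * (((m + k : ℕ) : ℝ) - (m : ℝ)) / ((m : ℝ) * ((m + k : ℕ) : ℝ))
        ≤ |C| * k / ((m : ℝ) * ((m + k : ℕ) : ℝ)) := by gcongr
    have h10 : |C| * k / ((m : ℝ) * ((m + k : ℕ) : ℝ)) ≤ |C| * k / (m : ℝ) := by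
      have hMk1 : (1:ℝ) ≤ ((m + k : ℕ) : ℝ) := by
        have : 1 ≤ m + k := by omega
        exact_mod_cast this
      gcongr
      nlinarith
    linarith
  have hls_yx : limsup (fun m => ((y m : EReal))) atTop = limsup (fun m => ((x m : EReal))) atTop :=
    le_antisymm (ereal_limsup_le_of_imp H1) (ereal_limsup_le_of_imp H2)
  have hli_yx : liminf (fun m => ((y m : EReal))) atTop = liminf (fun m => ((x m : EReal))) atTop :=
    le_antisymm (ereal_liminf_le_of_imp H1) (ereal_liminf_le_of_imp H2)
  have hfun : (fun m : ℕ => ((u (m + k) / m : ℝ) : EReal)) = (fun m : ℕ => ((y m : EReal))) := by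
    simp only [hy]
  constructor
  · rw [hfun, hls_yx]
    exact hshift_ls
  · rw [hfun, hli_yx]
    exact hshift_li

end Analytic


noncomputable def uA {X : Type*} [MetricSpace X] (f : X → X) (U : Set (Set X)) (m : ℕ) : ℝ :=
  -Real.log ((lebN f U m).toReal)

lemma exists_lb {X : Type*} [MetricSpace X] {f : X → X} {U : Set (Set X)}
    (hanti : Antitone (lebN f U)) (hpos : ∀ m, 0 < lebN f U m) :
    ∃ C : ℝ, ∃ m1 : ℕ, ∀ m ≥ m1, C ≤ uA f U m := by
  by_cases htop : ∀ m, lebN f U m = ⊤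
  · refine ⟨0, 0, fun m _ => ?_⟩
    simp [uA, htop m]
  · push_neg at htop
    obtain ⟨m1, hm1⟩ := htop
    refine ⟨uA f U m1, m1, fun m hm => ?_⟩
    have hle : lebN f U m ≤ lebN f U m1 := hanti hm
    have hfin : lebN f U m ≠ ⊤ := fun h => hm1 (top_le_iff.mp (h ▸ hle))
    have h1 : (lebN f U m).toReal ≤ (lebN f U m1).toReal := ENNReal.toReal_mono hm1 hle
    have h2 : 0 < (lebN f U m).toReal := ENNReal.toReal_pos (hpos m).ne' hfin
    exact neg_le_neg (Real.log_le_log h2 h1)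

theorem hL_preCov_covSeq' {X : Type*} [MetricSpace X] [CompactSpace X]
    (f : X → X) (hf : Continuous f) (U : Set (Set X))
    (hU : IsOpenCover U) (hUfin : U.Finite) (n : ℕ) (hn : 0 < n) :
    hLplus f U = hLplus f (preCov (f^[n]) U) ∧
    hLplus f U = hLplus f (covSeq f U n) ∧
    hLminus f U = hLminus f (preCov (f^[n]) U) ∧
    hLminus f U = hLminus f (covSeq f U n) := by
  have hdanti : Antitone (lebN f U) := lebN_antitone f U
  have hdpos : ∀ m, 0 < lebN f U m := fun m => leb_pos (covSeq_isOpenCover hf hU m)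
  obtain ⟨C, m1, hC⟩ := exists_lb hdanti hdpos
  -- generic rewriting of hLplus/hLminus into uA form
  have hplus_eq : ∀ V : Set (Set X), hLplus f V
      = limsup (fun m : ℕ => ((uA f V m / m : ℝ) : EReal)) atTop := fun V => rfl
  have hminus_eq : ∀ V : Set (Set X), hLminus f V
      = liminf (fun m : ℕ => ((uA f V m / m : ℝ) : EReal)) atTop := fun V => rfl
  -- covSeq part
  have htermS : ∀ᶠ m in atTop, ((uA f (covSeq f U n) m / m : ℝ) : EReal)
      = ((uA f U (m + (n - 1)) / m : ℝ) : EReal) := by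
    filter_upwards [eventually_ge_atTop 1] with m hm
    have h1 := lebN_covSeq_eq f U hn (m - 1)
    have e1 : m - 1 + 1 = m := by omega
    have e2 : m - 1 + n = m + (n - 1) := by omega
    rw [e1, e2] at h1
    simp only [uA, h1]
  obtain ⟨hshiftS_ls, hshiftS_li⟩ := ereal_shift_div_eq (uA f U) (n - 1) C m1 hC
  have hcovseq_plus : hLplus f U = hLplus f (covSeq f U n) := by
    rw [hplus_eq, hplus_eq, limsup_congr htermS, hshiftS_ls]
  have hcovseq_minus : hLminus f U = hLminus f (covSeq f U n) := by
    rw [hminus_eq, hminus_eq, liminf_congr htermS, hshiftS_li]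
  -- preCov part
  have hPC : ∀ m, lebN f (preCov (f^[n]) U) m = leb (preCov (f^[n]) (covSeq f U m)) := by
    intro m
    unfold lebN
    rw [covSeq_preCov]
  have hD_le : ∀ m, lebN f U (n + m) ≤ lebN f (preCov (f^[n]) U) m := by
    intro m
    rw [hPC m]
    exact lebN_add_le_preCov f U n m
  have hminle : ∀ m, min (lebN f U n) (lebN f (preCov (f^[n]) U) m) ≤ lebN f U (n + m) := by
    intro m
    rw [hPC m]
    exact min_le_lebN_add f U n m
  have hDanti : Antitone (lebN f (preCov (f^[n]) U)) := lebN_antitone f _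
  by_cases hB : ∃ m0, lebN f U (n + m0) < lebN f U n
  · -- eventually strictly smaller : D m = d (n+m) eventually
    obtain ⟨m0, hm0⟩ := hB
    have heq : ∀ m ≥ m0, lebN f (preCov (f^[n]) U) m = lebN f U (n + m) := by
      intro m hm
      have hlt : lebN f U (n + m) < lebN f U n :=
        lt_of_le_of_lt (hdanti (by omega)) hm0
      refine le_antisymm ?_ (hD_le m)
      have hminm := hminle m
      rcases le_total (lebN f U n) (lebN f (preCov (f^[n]) U) m) with h | h
      · rw [min_eq_left h] at hminm
        exact absurd hminm (not_le.mpr hlt)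
      · rwa [min_eq_right h] at hminm
    have htermP : ∀ᶠ m in atTop, ((uA f (preCov (f^[n]) U) m / m : ℝ) : EReal)
        = ((uA f U (m + n) / m : ℝ) : EReal) := by
      filter_upwards [eventually_ge_atTop m0] with m hm
      have e : n + m = m + n := Nat.add_comm n m
      simp only [uA, heq m hm, e]
    obtain ⟨hshiftP_ls, hshiftP_li⟩ := ereal_shift_div_eq (uA f U) n C m1 hC
    have hplus : hLplus f U = hLplus f (preCov (f^[n]) U) := by
      rw [hplus_eq, hplus_eq, limsup_congr htermP, hshiftP_ls]
    have hminus : hLminus f U = hLminus f (preCov (f^[n]) U) := by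
      rw [hminus_eq, hminus_eq, liminf_congr htermP, hshiftP_li]
    exact ⟨hplus, hcovseq_plus, hminus, hcovseq_minus⟩
  · -- constant case
    push_neg at hB
    have hconst : ∀ m, lebN f U (n + m) = lebN f U n :=
      fun m => le_antisymm (hdanti (by omega)) (hB m)
    have hUb : ∀ m ≥ n, |uA f U m| ≤ |Real.log ((lebN f U n).toReal)| := by
      intro m hm
      have h1 : lebN f U m = lebN f U n := by
        have := hconst (m - n)
        rwa [show n + (m - n) = m by omega] at this
      simp only [uA, h1, abs_neg, le_refl]
    have hUls := (ereal_tendsto_div_zero hUb).limsup_eq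
    have hUli := (ereal_tendsto_div_zero hUb).liminf_eq
    have hDb : ∃ K : ℝ, ∃ m2 : ℕ, ∀ m ≥ m2, |uA f (preCov (f^[n]) U) m| ≤ K := by
      by_cases hDtop : ∀ m, lebN f (preCov (f^[n]) U) m = ⊤
      · refine ⟨0, 0, fun m _ => ?_⟩
        simp [uA, hDtop m]
      · push_neg at hDtop
        obtain ⟨m2, hm2⟩ := hDtop
        refine ⟨max |Real.log ((lebN f U n).toReal)|
          |Real.log ((lebN f (preCov (f^[n]) U) m2).toReal)|, m2, fun m hm => ?_⟩
        have hcm : lebN f U n ≤ lebN f (preCov (f^[n]) U) m := by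
          rw [← hconst m]; exact hD_le m
        have hDm2 : lebN f (preCov (f^[n]) U) m ≤ lebN f (preCov (f^[n]) U) m2 := hDanti hm
        have hDfin : lebN f (preCov (f^[n]) U) m ≠ ⊤ := fun h => hm2 (top_le_iff.mp (h ▸ hDm2))
        have ht1 : (lebN f U n).toReal ≤ (lebN f (preCov (f^[n]) U) m).toReal :=
          ENNReal.toReal_mono hDfin hcm
        have ht2 : (lebN f (preCov (f^[n]) U) m).toReal
            ≤ (lebN f (preCov (f^[n]) U) m2).toReal := ENNReal.toReal_mono hm2 hDm2
        have hcpos : 0 < (lebN f U n).toReal :=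
          ENNReal.toReal_pos (hdpos n).ne' (fun h => hDfin (top_le_iff.mp (h ▸ hcm)))
        have hl1 : Real.log ((lebN f U n).toReal)
            ≤ Real.log ((lebN f (preCov (f^[n]) U) m).toReal) := Real.log_le_log hcpos ht1
        have hl2 : Real.log ((lebN f (preCov (f^[n]) U) m).toReal)
            ≤ Real.log ((lebN f (preCov (f^[n]) U) m2).toReal) :=
          Real.log_le_log (lt_of_lt_of_le hcpos ht1) ht2
        rw [uA, abs_neg, abs_le]
        constructor
        · have := neg_abs_le (Real.log ((lebN f U n).toReal))
          have h3 : -(max |Real.log ((lebN f U n).toReal)|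
              |Real.log ((lebN f (preCov (f^[n]) U) m2).toReal)|)
              ≤ -|Real.log ((lebN f U n).toReal)| := neg_le_neg (le_max_left _ _)
          linarith
        · have := le_abs_self (Real.log ((lebN f (preCov (f^[n]) U) m2).toReal))
          have h3 := le_max_right |Real.log ((lebN f U n).toReal)|
            |Real.log ((lebN f (preCov (f^[n]) U) m2).toReal)|
          linarith
    obtain ⟨K, m2, hK⟩ := hDb
    have hDls := (ereal_tendsto_div_zero hK).limsup_eq
    have hDli := (ereal_tendsto_div_zero hK).liminf_eq
    have hplus : hLplus f U = hLplus f (preCov (f^[n]) U) := by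
      rw [hplus_eq, hplus_eq, hUls, hDls]
    have hminus : hLminus f U = hLminus f (preCov (f^[n]) U) := by
      rw [hminus_eq, hminus_eq, hUli, hDli]
    exact ⟨hplus, hcovseq_plus, hminus, hcovseq_minus⟩


/-- `h_L^±(f,U) = h_L^±(f, f^{-n}(U)) = h_L^±(f, U_f^n)` for every `n > 0`. -/
theorem hL_preCov_covSeq {X : Type*} [MetricSpace X] [CompactSpace X]
    (f : X → X) (hf : Continuous f) (U : Set (Set X))
    (hU : IsOpenCover U) (hUfin : U.Finite) (n : ℕ) (hn : 0 < n) :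
    hLplus f U = hLplus f (preCov (f^[n]) U) ∧
    hLplus f U = hLplus f (covSeq f U n) ∧
    hLminus f U = hLminus f (preCov (f^[n]) U) ∧
    hLminus f U = hLminus f (covSeq f U n) := by
  exact hL_preCov_covSeq' f hf U hU hUfin n hn
end

section
/- Let (a_n) be a real sequence bounded below by K, and let b_n = max{a_k : 1 ≤ k ≤ n}. Then limsup_{n→∞} a_n/n = limsup_{n→∞} b_n/n. -/
open Set Filter Topology Metric
open scoped ENNReal

/-- For a sequence `a` bounded below, the running maximum `b n = max{a_k : 1 ≤ k ≤ n}`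
satisfies `limsup aₙ/n = limsup bₙ/n`. -/
theorem limsup_div_eq_limsup_runningMax_div (a : ℕ → ℝ) (K : ℝ) (hK : ∀ n, K ≤ a n)
    (b : ℕ → ℝ) (hb : ∀ n, b n = sSup {x : ℝ | ∃ k, 1 ≤ k ∧ k ≤ n ∧ x = a k}) :
    Filter.limsup (fun n : ℕ => ((a n / n : ℝ) : EReal)) Filter.atTop =
      Filter.limsup (fun n : ℕ => ((b n / n : ℝ) : EReal)) Filter.atTop := by
    -- the sets
  have hset : ∀ n, {x : ℝ | ∃ k, 1 ≤ k ∧ k ≤ n ∧ x = a k} = a '' (Set.Icc 1 n) := by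
    intro n; ext x;
    simp [Set.mem_image, eq_comm, and_assoc]
  have hbdd : ∀ n, BddAbove {x : ℝ | ∃ k, 1 ≤ k ∧ k ≤ n ∧ x = a k} := by
    intro n; rw [hset]
    exact ((Set.finite_Icc 1 n).image a).bddAbove
  have hne : ∀ n, 1 ≤ n → ({x : ℝ | ∃ k, 1 ≤ k ∧ k ≤ n ∧ x = a k}).Nonempty := by
    intro n hn; exact ⟨a n, n, hn, le_rfl, rfl⟩
  have hab : ∀ n, 1 ≤ n → a n ≤ b n := by
    intro n hn; rw [hb]; exact le_csSup (hbdd n) ⟨n, hn, le_rfl, rfl⟩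
  have hble : ∀ n, 1 ≤ n → ∀ c : ℝ, (∀ k, 1 ≤ k → k ≤ n → a k ≤ c) → b n ≤ c := by
    intro n hn c hc; rw [hb]
    exact csSup_le (hne n hn) (by rintro x ⟨k, h1, h2, rfl⟩; exact hc k h1 h2)
  -- limsup a ≥ 0
  have h0 : (0 : EReal) ≤ Filter.limsup (fun n : ℕ => ((a n / n : ℝ) : EReal)) Filter.atTop := by
    have hlim : Filter.Tendsto (fun n : ℕ => ((K / n : ℝ) : EReal)) atTop (nhds (0 : EReal)) := by
      have : Filter.Tendsto (fun n : ℕ => (K / n : ℝ)) atTop (nhds 0) :=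
        tendsto_const_div_atTop_nhds_zero_nat K
      exact EReal.coe_zero ▸ (EReal.tendsto_coe).2 this
    calc (0 : EReal) = Filter.limsup (fun n : ℕ => ((K / n : ℝ) : EReal)) atTop :=
          (hlim.limsup_eq).symm
      _ ≤ _ := by
          refine Filter.limsup_le_limsup ?_ (by isBoundedDefault) (by isBoundedDefault)
          filter_upwards [Filter.eventually_ge_atTop 1] with n hn
          have hn' : (0:ℝ) ≤ n := by positivity
          have : K / (n:ℝ) ≤ a n / n := by gcongr; exact hK n
          exact_mod_cast this
  apply le_antisymm
  · refine Filter.limsup_le_limsup ?_ (by isBoundedDefault) (by isBoundedDefault)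
    filter_upwards [Filter.eventually_ge_atTop 1] with n hn
    have hn' : (0:ℝ) ≤ n := by positivity
    have : a n / (n:ℝ) ≤ b n / n := by gcongr; exact hab n hn
    exact_mod_cast this
  · by_contra h
    push_neg at h
    obtain ⟨c, hc1, hc2⟩ := EReal.exists_between_coe_real h
    have hc0 : (0:ℝ) < c := by exact_mod_cast lt_of_le_of_lt h0 hc1
    have hev : ∀ᶠ n : ℕ in atTop, ((a n / n : ℝ) : EReal) < (c : EReal) :=
      Filter.eventually_lt_of_limsup_lt hc1
    obtain ⟨N, hN⟩ := Filter.eventually_atTop.1 hev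
    set N' := max N 1 with hN'def
    have hcn : ∀ᶠ n : ℕ in atTop, b N' ≤ c * n := by
      have : Filter.Tendsto (fun n : ℕ => c * (n : ℝ)) atTop atTop :=
        (tendsto_natCast_atTop_atTop).const_mul_atTop hc0
      exact this.eventually_ge_atTop (b N')
    have hfin : Filter.limsup (fun n : ℕ => ((b n / n : ℝ) : EReal)) Filter.atTop ≤ (c : EReal) := by
      refine Filter.limsup_le_of_le (by isBoundedDefault) ?_
      filter_upwards [hcn, Filter.eventually_ge_atTop N', Filter.eventually_ge_atTop 1]
        with n h1 h2 h3
      have hn0 : (0:ℝ) < n := by exact_mod_cast h3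
      have hbn : b n ≤ c * n := by
        refine hble n h3 _ (fun k hk1 hkn => ?_)
        by_cases hkN : k ≤ N'
        · have : a k ≤ b N' := by
            rw [hb]; exact le_csSup (hbdd N') ⟨k, hk1, hkN, rfl⟩
          exact this.trans h1
        · have hkN2 : N ≤ k := le_trans (le_max_left N 1) (le_of_not_ge hkN)
          have hk0 : (0:ℝ) < k := by exact_mod_cast hk1
          have : (↑(a k / k) : EReal) < (c : EReal) := hN k hkN2
          have hak : a k / k < c := by exact_mod_cast this
          have : a k < c * k := (div_lt_iff₀ hk0).1 hak
          have hkn' : (k:ℝ) ≤ n := by exact_mod_cast hkn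
          nlinarith
      have : b n / n ≤ c := (div_le_iff₀ hn0).2 hbn
      exact_mod_cast this
    exact absurd hc2 (not_lt.2 hfin)
end

section
/- Let U be a finite open cover of a compact metric space X and W a minimal subcover of U (no proper subfamily of W covers X). Then N(δ(W)) ≥ |W| = S(U), where N(γ) is the minimal number of open γ-balls needed to cover X, δ(W) is the Lebesgue number of W, and S(U) is the minimal cardinality of a subcover of U. -/
open Set Filter Topology Metric
open scoped ENNReal

/-- For a minimal subcover `W` of a finite open cover `U`,
`N(δ(W)) ≥ |W| = S(U)`. -/
theorem covN_leb_ge_card_minimal_subcover {X : Type*} [MetricSpace X] [CompactSpace X]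
    (U W : Set (Set X)) (hU : IsOpenCover U) (hUfin : U.Finite)
    (hWU : W ⊆ U) (hWcov : ⋃₀ W = Set.univ)
    (hWmin : ∀ W' ⊆ W, ⋃₀ W' = Set.univ → W' = W)
    (hWcard : W.ncard = covS U) :
    W.ncard ≤ covN X (leb W) ∧ W.ncard = covS U := by
  refine ⟨?_, hWcard⟩
  rcases isEmpty_or_nonempty X with hX | hX
  · have hW0 : (∅ : Set (Set X)) = W :=
      hWmin ∅ (empty_subset W) (by
        rw [Set.sUnion_empty, Set.univ_eq_empty_iff.2 hX])
    rw [← hW0]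
    simp
  · have hWfin : W.Finite := hUfin.subset hWU
    have hWo : ∀ A ∈ W, IsOpen A := fun A hA => hU.1 A (hWU hA)
    -- Lebesgue number lemma: some positive δ₀ works
    obtain ⟨δ₀, hδ₀pos, hδ₀⟩ :
        ∃ δ : ℝ≥0∞, 0 < δ ∧ ∀ x : X, ∃ A ∈ W, EMetric.ball x δ ⊆ A := by
      obtain ⟨ε, hε, h⟩ := uniformity_basis_edist.lebesgue_number_lemma
        (isCompact_univ (X := X)) (U := fun A : W => (A : Set X))
        (fun A => hWo A A.2) (by rw [← sUnion_eq_iUnion, hWcov])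
      exact ⟨ε, hε, fun x => by
        obtain ⟨A, hA⟩ := h x (mem_univ x)
        exact ⟨A, A.2, fun y hy => hA (by simpa [UniformSpace.ball, edist_comm] using (show edist y x < ε from hy))⟩⟩
    set S : Set ℝ≥0∞ := {δ : ℝ≥0∞ | ∀ x : X, ∃ A ∈ W, EMetric.ball x δ ⊆ A} with hS
    have hδ₀S : δ₀ ∈ S := hδ₀
    have hpos : 0 < leb W := lt_of_lt_of_le hδ₀pos (le_sSup hδ₀S)
    have hWne : W.Nonempty := by
      rcases (hδ₀ (Classical.arbitrary X)) with ⟨A, hA, -⟩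
      exact ⟨A, hA⟩
    -- the supremum is attained: every ball of radius `leb W` lies in some member of `W`
    have key : ∀ x : X, ∃ A ∈ W, EMetric.ball x (leb W) ⊆ A := by
      intro x
      by_contra h
      push_neg at h
      have hy : ∀ A ∈ W, ∃ y ∈ EMetric.ball x (leb W), y ∉ A := by
        intro A hA
        rcases Set.not_subset.1 (h A hA) with ⟨y, hy1, hy2⟩
        exact ⟨y, hy1, hy2⟩
      choose y hy1 hy2 using hy
      classical
      set t := hWfin.toFinset with ht
      have htne : t.Nonempty := by
        rcases hWne with ⟨A, hA⟩
        exact ⟨A, hWfin.mem_toFinset.2 hA⟩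
      set m : ℝ≥0∞ := t.sup fun A => if hA : A ∈ W then edist (y A hA) x else 0 with hm
      have hmlt : m < leb W := by
        rw [hm, Finset.sup_lt_iff hpos]
        intro A hAt
        have hA : A ∈ W := hWfin.mem_toFinset.1 hAt
        simpa [hA] using (show edist (y A hA) x < leb W from hy1 A hA)
      obtain ⟨δ'', hδ''S, hδ''⟩ : ∃ δ'' ∈ S, m < δ'' := by
        have := lt_sSup_iff.1 hmlt
        exact this
      obtain ⟨A, hA, hball⟩ := hδ''S x
      refine hy2 A hA (hball (EMetric.mem_ball.2 ?_))
      have hle : edist (y A hA) x ≤ m := by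
        have : A ∈ t := hWfin.mem_toFinset.2 hA
        have h' := Finset.le_sup (f := fun B => if hB : B ∈ W then edist (y B hB) x else 0) this
        simpa [hA] using h'
      exact lt_of_le_of_lt hle hδ''
    choose F hF1 hF2 using key
    -- the set defining covN is nonempty
    have hne : {n : ℕ | ∃ s : Finset X, s.card = n ∧
        ⋃ x ∈ s, EMetric.ball x (leb W) = Set.univ}.Nonempty := by
      obtain ⟨t, ht⟩ := isCompact_univ.elim_finite_subcover
        (fun x : X => EMetric.ball x (leb W)) (fun x => EMetric.isOpen_ball)
        (fun x _ => Set.mem_iUnion.2 ⟨x, EMetric.mem_ball_self hpos⟩)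
      refine ⟨t.card, t, rfl, ?_⟩
      apply Set.eq_univ_of_univ_subset
      simpa using ht
    rw [covN]
    refine le_csInf hne ?_
    rintro n ⟨s, hcard, hcover⟩
    set W' : Set (Set X) := F '' ↑s with hW'
    have hW'W : W' ⊆ W := by
      rintro A ⟨x, -, rfl⟩
      exact hF1 x
    have hW'cov : ⋃₀ W' = Set.univ := by
      apply Set.eq_univ_of_univ_subset
      intro z _
      have : z ∈ ⋃ x ∈ s, EMetric.ball x (leb W) := hcover ▸ Set.mem_univ z
      rcases Set.mem_iUnion₂.1 this with ⟨x, hx, hz⟩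
      exact ⟨F x, ⟨x, hx, rfl⟩, hF2 x hz⟩
    have hWW' : W' = W := hWmin W' hW'W hW'cov
    calc W.ncard = W'.ncard := by rw [hWW']
      _ ≤ (↑s : Set X).ncard := Set.ncard_image_le s.finite_toSet
      _ = s.card := Set.ncard_coe_finset s
      _ = n := hcard
end

section
/- Let f : X → X be Lipschitz with constant L(f) on a compact metric space. Then for every finite open cover U, h_L^+(f,U) ≤ max{log L(f), 0}. Consequently, if L(f) > 1, then h(f) ≤ dim_H(X) · log L(f). -/
open Set Filter Topology Metric
open scoped ENNReal NNReal

section Aux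
open MeasureTheory
lemma limsup_coe_le_of_le_add (u : ℕ → ℝ) (c b : ℝ)
    (h : ∀ n : ℕ, 1 ≤ n → u n ≤ c / n + b) :
    Filter.limsup (fun n : ℕ => ((u n : ℝ) : EReal)) atTop ≤ ((b : ℝ) : EReal) := by
  have h1 : Tendsto (fun n : ℕ => ((c / n + b : ℝ) : EReal)) atTop (nhds ((b : ℝ) : EReal)) := by
    rw [EReal.tendsto_coe]
    simpa using (tendsto_const_div_atTop_nhds_zero_nat c).add_const b
  have h2 : Filter.limsup (fun n : ℕ => ((c / n + b : ℝ) : EReal)) atTop = ((b : ℝ) : EReal) :=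
    h1.limsup_eq
  refine le_trans (Filter.limsup_le_limsup ?_) h2.le
  filter_upwards [Filter.eventually_ge_atTop 1] with n hn
  exact EReal.coe_le_coe_iff.2 (h n hn)

-- iterate dist

lemma dist_iterate_le {X : Type*} [MetricSpace X] {f : X → X} {L : ℝ≥0}
    (hL : LipschitzWith L f) (k : ℕ) (x y : X) :
    dist (f^[k] x) (f^[k] y) ≤ (L : ℝ) ^ k * dist x y := by
  simpa using (hL.iterate k).dist_le_mul x y

-- packing

lemma packing_bound {X : Type*} [MetricSpace X] [CompactSpace X] {ρ : ℝ} (hρ : 0 < ρ) :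
    ∃ B : ℕ, ∀ E : Finset X, (∀ x ∈ E, ∀ y ∈ E, x ≠ y → ρ < dist x y) → E.card ≤ B := by
  classical
  obtain ⟨t, -, htfin, htcov⟩ := finite_cover_balls_of_compact (isCompact_univ : IsCompact (Set.univ : Set X)) (half_pos hρ)
  have hc : ∀ x : X, ∃ c ∈ t, x ∈ Metric.ball c (ρ / 2) := by
    intro x
    have := htcov (mem_univ x)
    simpa using this
  choose g hgt hgb using hc
  refine ⟨htfin.toFinset.card, fun E hE => ?_⟩
  refine Finset.card_le_card_of_injOn g (fun x _ => htfin.mem_toFinset.2 (hgt x)) ?_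
  intro x hx y hy hxy
  by_contra hne
  have h1 := hE x (by simpa using hx) y (by simpa using hy) hne
  have h2 : dist x y ≤ dist x (g x) + dist (g x) y := dist_triangle _ _ _
  have h3 : dist x (g x) < ρ / 2 := by simpa [dist_comm] using hgb x
  have h4 : dist (g x) y < ρ / 2 := by
    have : y ∈ Metric.ball (g x) (ρ / 2) := by rw [hxy]; exact hgb y
    simpa [dist_comm] using this
  linarith

lemma rpow_perturb {d s η β : ℝ} (hs : 0 < s) (hη : 0 < η) (hβ : 0 < β) :
    ∃ δ : ℝ, 0 < δ ∧ 2 * δ ≤ β ∧ (d + 2 * δ) ^ s ≤ d ^ s + η := by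
  have hcont : ContinuousAt (fun x : ℝ => (d + 2 * x) ^ s) 0 := by
    have h1 : ContinuousAt (fun x : ℝ => d + 2 * x) 0 := by fun_prop
    exact h1.rpow_const (Or.inr hs.le)
  have htend : Tendsto (fun x : ℝ => (d + 2 * x) ^ s) (nhds 0) (nhds (d ^ s)) := by
    have : (fun x : ℝ => (d + 2 * x) ^ s) 0 = d ^ s := by norm_num
    simpa [this] using hcont.tendsto
  have hev : ∀ᶠ x in nhds (0 : ℝ), (d + 2 * x) ^ s < d ^ s + η :=
    htend.eventually_lt_const (by linarith)
  obtain ⟨r, hr, hball⟩ := Metric.eventually_nhds_iff.1 hev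
  refine ⟨min (r / 2) (β / 2), by positivity, ?_, ?_⟩
  · have : min (r / 2) (β / 2) ≤ β / 2 := min_le_right _ _
    linarith
  · have hlt : dist (min (r / 2) (β / 2)) (0 : ℝ) < r := by
      rw [Real.dist_eq, sub_zero, abs_of_pos (by positivity)]
      have : min (r / 2) (β / 2) ≤ r / 2 := min_le_left _ _
      linarith
    exact (hball hlt).le

lemma tau_choice {s c β : ℝ} (hs : 0 < s) (hc : 0 < c) (hβ : 0 < β) (N : ℕ) :
    ∃ τ : ℝ, 0 < τ ∧ τ ≤ β ∧ (N : ℝ) * τ ^ s ≤ c := by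
  set c' : ℝ := c / (N + 1) with hc'
  have hc'pos : 0 < c' := by positivity
  set τ0 : ℝ := c' ^ (1 / s) with hτ0
  have hτ0pos : 0 < τ0 := Real.rpow_pos_of_pos hc'pos _
  refine ⟨min β τ0, lt_min hβ hτ0pos, min_le_left _ _, ?_⟩
  have h1 : (min β τ0) ^ s ≤ τ0 ^ s :=
    Real.rpow_le_rpow (le_min hβ.le hτ0pos.le) (min_le_right _ _) hs.le
  have h2 : τ0 ^ s = c' := by
    rw [hτ0, ← Real.rpow_mul hc'pos.le, one_div_mul_cancel hs.ne', Real.rpow_one]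
  have hN1 : (0 : ℝ) < (N : ℝ) + 1 := by positivity
  have h3 : (N : ℝ) * c' ≤ c := by
    rw [hc', ← mul_div_assoc, div_le_iff₀ hN1]
    nlinarith [hc.le, Nat.cast_nonneg (α := ℝ) N]
  calc (N : ℝ) * (min β τ0) ^ s ≤ (N : ℝ) * τ0 ^ s :=
        mul_le_mul_of_nonneg_left h1 (Nat.cast_nonneg N)
    _ = (N : ℝ) * c' := by rw [h2]
    _ ≤ c := h3

lemma cover_data {X : Type*} [MetricSpace X] [CompactSpace X] {s ε Lr : ℝ}
    (hs : 0 < s) (hε : 0 < ε) (hL1 : 1 < Lr)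
    (hdim : dimH (Set.univ : Set X) < ENNReal.ofReal s) :
    ∃ (F : Finset ℕ) (V : ℕ → Set X) (D : ℕ → ℝ),
      (∀ x : X, ∃ i ∈ F, x ∈ V i) ∧
      (∀ i, 0 < D i) ∧ (∀ i, D i ≤ ε / Lr) ∧
      (∀ i, ∀ x ∈ V i, ∀ y ∈ V i, dist x y ≤ D i) ∧
      (∑ i ∈ F, (D i) ^ s ≤ ε ^ s / 2) := by
  classical
  borelize X
  have hLr0 : 0 < Lr := lt_trans one_pos hL1
  set β : ℝ := ε / (2 * Lr) with hβdef
  have hβ : 0 < β := by positivity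
  have hεs : 0 < ε ^ s := Real.rpow_pos_of_pos hε _
  -- Hausdorff measure zero
  have hμ : μH[s] (Set.univ : Set X) = 0 := by
    have h1 : dimH (Set.univ : Set X) < ((s.toNNReal : ℝ≥0) : ℝ≥0∞) := by
      rwa [show ((s.toNNReal : ℝ≥0) : ℝ≥0∞) = ENNReal.ofReal s from rfl]
    have := hausdorffMeasure_of_dimH_lt h1
    rwa [Real.coe_toNNReal s hs.le] at this
  rw [MeasureTheory.Measure.hausdorffMeasure_apply] at hμ
  -- the infimum at scale β is 0
  have hinf : (⨅ (t : ℕ → Set X) (_ : (Set.univ : Set X) ⊆ ⋃ n, t n)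
      (_ : ∀ n, EMetric.diam (t n) ≤ ENNReal.ofReal β),
      ∑' n, ⨆ _ : (t n).Nonempty, EMetric.diam (t n) ^ s) = 0 := by
    refine le_antisymm ?_ zero_le
    rw [← hμ]
    exact le_iSup₂ (f := fun (r : ℝ≥0∞) (_ : 0 < r) =>
      ⨅ (t : ℕ → Set X) (_ : (Set.univ : Set X) ⊆ ⋃ n, t n)
        (_ : ∀ n, EMetric.diam (t n) ≤ r),
        ∑' n, ⨆ _ : (t n).Nonempty, EMetric.diam (t n) ^ s)
      (ENNReal.ofReal β) (by simpa using hβ)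
  have hlt : (⨅ (t : ℕ → Set X) (_ : (Set.univ : Set X) ⊆ ⋃ n, t n)
      (_ : ∀ n, EMetric.diam (t n) ≤ ENNReal.ofReal β),
      ∑' n, ⨆ _ : (t n).Nonempty, EMetric.diam (t n) ^ s) < ENNReal.ofReal (ε ^ s / 8) := by
    rw [hinf]; exact ENNReal.ofReal_pos.2 (by positivity)
  rw [iInf_lt_iff] at hlt
  obtain ⟨t, hlt⟩ := hlt
  rw [iInf_lt_iff] at hlt
  obtain ⟨htcov, hlt⟩ := hlt
  rw [iInf_lt_iff] at hlt
  obtain ⟨htdiam, htsum⟩ := hlt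
  -- choose thickening radii
  have hδex : ∀ n : ℕ, ∃ δ : ℝ, 0 < δ ∧ 2 * δ ≤ β ∧
      ((EMetric.diam (t n)).toReal + 2 * δ) ^ s ≤
        (EMetric.diam (t n)).toReal ^ s + ε ^ s / 16 * (1 / 2) ^ n := by
    intro n
    exact rpow_perturb hs (by positivity) hβ
  choose δ hδpos hδβ hδs using hδex
  set V : ℕ → Set X := fun n => if (t n).Nonempty then Metric.thickening (δ n) (t n) else ∅
    with hVdef
  have hVopen : ∀ n, IsOpen (V n) := by
    intro n; rw [hVdef]; dsimp only
    split_ifs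
    · exact Metric.isOpen_thickening
    · exact isOpen_empty
  have htfin : ∀ n, EMetric.diam (t n) ≠ ⊤ :=
    fun n => ne_top_of_le_ne_top ENNReal.ofReal_ne_top (htdiam n)
  have hVdiam : ∀ n, EMetric.diam (V n) ≤ ENNReal.ofReal ((EMetric.diam (t n)).toReal + 2 * δ n) := by
    intro n; rw [hVdef]; dsimp only
    split_ifs with h
    · have h1 : Metric.thickening (δ n) (t n) =
          Metric.thickening (((δ n).toNNReal : ℝ)) (t n) := by
        rw [Real.coe_toNNReal _ (hδpos n).le]
      rw [h1]
      refine (Metric.ediam_thickening_le _).trans ?_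
      rw [ENNReal.ofReal_add (ENNReal.toReal_nonneg) (by linarith [hδpos n])]
      gcongr
      · rw [ENNReal.ofReal_toReal (htfin n)]; exact le_rfl
      · rw [show ((2 : ℝ≥0∞) * ((δ n).toNNReal : ℝ≥0∞)) = ((2 * (δ n).toNNReal : ℝ≥0) : ℝ≥0∞)
          by push_cast; ring]
        rw [show ENNReal.ofReal (2 * δ n) = ((2 * δ n).toNNReal : ℝ≥0∞) from rfl]
        rw [ENNReal.coe_le_coe]
        rw [Real.toNNReal_mul (by norm_num)]
        simp
    · rw [show EMetric.diam (∅ : Set X) = 0 from Metric.ediam_empty]; simp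
  have hVdiam2 : ∀ n, EMetric.diam (V n) ≤ ENNReal.ofReal (2 * β) := by
    intro n
    refine (hVdiam n).trans (ENNReal.ofReal_le_ofReal ?_)
    have h1 : (EMetric.diam (t n)).toReal ≤ β := by
      have := ENNReal.toReal_mono ENNReal.ofReal_ne_top (htdiam n)
      rwa [ENNReal.toReal_ofReal hβ.le] at this
    have := hδβ n
    linarith
  have hVfin : ∀ n, EMetric.diam (V n) ≠ ⊤ :=
    fun n => ne_top_of_le_ne_top ENNReal.ofReal_ne_top (hVdiam2 n)
  have hVcover : (Set.univ : Set X) ⊆ ⋃ n, V n := by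
    intro x _
    obtain ⟨n, hn⟩ := mem_iUnion.1 (htcov (mem_univ x))
    refine mem_iUnion.2 ⟨n, ?_⟩
    rw [hVdef]; dsimp only
    rw [if_pos ⟨x, hn⟩]
    exact Metric.self_subset_thickening (hδpos n) _ hn
  obtain ⟨F, hF⟩ := isCompact_univ.elim_finite_subcover V hVopen hVcover
  obtain ⟨τ, hτpos, hτβ, hτs⟩ := tau_choice hs (by positivity : (0:ℝ) < ε ^ s / 8) hβ F.card
  set D : ℕ → ℝ := fun i => max ((EMetric.diam (V i)).toReal) τ with hDdef
  have hDpos : ∀ i, 0 < D i := fun i => lt_of_lt_of_le hτpos (le_max_right _ _)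
  have hDle : ∀ i, D i ≤ ε / Lr := by
    intro i
    have h2β : 2 * β = ε / Lr := by rw [hβdef]; field_simp
    refine max_le ?_ (by linarith [hτβ, hβ])
    have := ENNReal.toReal_mono ENNReal.ofReal_ne_top (hVdiam2 i)
    rw [ENNReal.toReal_ofReal (by positivity)] at this
    linarith
  have hdistV : ∀ i, ∀ x ∈ V i, ∀ y ∈ V i, dist x y ≤ D i := by
    intro i x hx y hy
    have h1 : edist x y ≤ EMetric.diam (V i) := EMetric.edist_le_diam_of_mem hx hy
    have h2 := ENNReal.toReal_mono (hVfin i) h1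
    rw [dist_edist]
    exact h2.trans (le_max_left _ _)
  -- the sum bound
  have hsumD : ∑ i ∈ F, (D i) ^ s ≤ ε ^ s / 2 := by
    set g : ℕ → ℝ≥0∞ := fun i => ⨆ _ : (t i).Nonempty, EMetric.diam (t i) ^ s with hgdef
    have hgfin : ∀ i, g i ≠ ⊤ := by
      intro i
      exact ne_top_of_le_ne_top (lt_of_lt_of_le htsum le_top).ne
        (ENNReal.le_tsum i)
    have htsum_ne : (∑' n, g n) ≠ ⊤ := (lt_of_lt_of_le htsum le_top).ne
    have hstep : ∀ i, ((EMetric.diam (V i)).toReal) ^ s ≤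
        (g i).toReal + ε ^ s / 16 * (1 / 2) ^ i := by
      intro i
      by_cases h : (t i).Nonempty
      · have hV : (EMetric.diam (V i)).toReal ≤ (EMetric.diam (t i)).toReal + 2 * δ i := by
          have h0 : (0:ℝ) ≤ (EMetric.diam (t i)).toReal + 2 * δ i := by
            have h1 := hδpos i
            have h2 : (0:ℝ) ≤ (EMetric.diam (t i)).toReal := ENNReal.toReal_nonneg
            linarith
          have := ENNReal.toReal_mono ENNReal.ofReal_ne_top (hVdiam i)
          rwa [ENNReal.toReal_ofReal h0] at this
        have hg : (g i).toReal = (EMetric.diam (t i)).toReal ^ s := by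
          rw [hgdef]; dsimp only; rw [iSup_pos h, ENNReal.toReal_rpow]
        calc ((EMetric.diam (V i)).toReal) ^ s
            ≤ ((EMetric.diam (t i)).toReal + 2 * δ i) ^ s :=
              Real.rpow_le_rpow ENNReal.toReal_nonneg hV hs.le
          _ ≤ (EMetric.diam (t i)).toReal ^ s + ε ^ s / 16 * (1 / 2) ^ i := hδs i
          _ = (g i).toReal + ε ^ s / 16 * (1 / 2) ^ i := by rw [hg]
      · have hVi : V i = ∅ := by rw [hVdef]; dsimp only; rw [if_neg h]
        rw [hVi]
        simp only [show EMetric.diam (∅ : Set X) = 0 from Metric.ediam_empty, ENNReal.toReal_zero]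
        rw [Real.zero_rpow hs.ne']
        have : (0:ℝ) ≤ (g i).toReal := ENNReal.toReal_nonneg
        positivity
    have hmax : ∀ i, (D i) ^ s ≤ ((EMetric.diam (V i)).toReal) ^ s + τ ^ s := by
      intro i
      have h1 : (0:ℝ) ≤ ((EMetric.diam (V i)).toReal) ^ s :=
        Real.rpow_nonneg ENNReal.toReal_nonneg _
      have h2 : (0:ℝ) ≤ τ ^ s := Real.rpow_nonneg hτpos.le _
      rcases max_cases ((EMetric.diam (V i)).toReal) τ with ⟨he, -⟩ | ⟨he, -⟩ <;>
        · rw [hDdef]; dsimp only; rw [he]; linarith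
    have hsum1 : ∑ i ∈ F, (g i).toReal ≤ ε ^ s / 8 := by
      rw [← ENNReal.toReal_sum (fun i _ => hgfin i)]
      refine le_trans (ENNReal.toReal_mono htsum_ne (ENNReal.sum_le_tsum F)) ?_
      exact ENNReal.toReal_le_of_le_ofReal (by positivity) htsum.le
    have hsum2 : ∑ i ∈ F, (ε ^ s / 16 * (1 / 2) ^ i) ≤ ε ^ s / 8 := by
      rw [← Finset.mul_sum]
      have hgeo : ∑ i ∈ F, ((1:ℝ) / 2) ^ i ≤ 2 := by
        refine le_trans ((summable_geometric_of_lt_one (by norm_num) (by norm_num)).sum_le_tsum F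
          (fun i _ => by positivity)) ?_
        rw [tsum_geometric_of_lt_one (by norm_num) (by norm_num)]
        norm_num
      nlinarith [hεs.le]
    calc ∑ i ∈ F, (D i) ^ s
        ≤ ∑ i ∈ F, (((EMetric.diam (V i)).toReal) ^ s + τ ^ s) :=
          Finset.sum_le_sum (fun i _ => hmax i)
      _ = ∑ i ∈ F, ((EMetric.diam (V i)).toReal) ^ s + F.card * τ ^ s := by
          rw [Finset.sum_add_distrib, Finset.sum_const, nsmul_eq_mul]
      _ ≤ ∑ i ∈ F, ((g i).toReal + ε ^ s / 16 * (1 / 2) ^ i) + ε ^ s / 8 := by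
          refine add_le_add (Finset.sum_le_sum (fun i _ => hstep i)) hτs
      _ = ∑ i ∈ F, (g i).toReal + ∑ i ∈ F, (ε ^ s / 16 * (1 / 2) ^ i) + ε ^ s / 8 := by
          rw [Finset.sum_add_distrib]
      _ ≤ ε ^ s / 8 + ε ^ s / 8 + ε ^ s / 8 := by
          refine add_le_add (add_le_add hsum1 hsum2) le_rfl
      _ ≤ ε ^ s / 2 := by linarith
  refine ⟨F, V, D, ?_, hDpos, hDle, hdistV, hsumD⟩
  intro x
  have := hF (mem_univ x)
  simpa using this

lemma key2 {X : Type*} [MetricSpace X] [CompactSpace X] (f : X → X) (L : ℝ≥0)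
    (hL : LipschitzWith L f) (hL1 : 1 < (L : ℝ)) {ε s : ℝ} (hε : 0 < ε) (hs : 0 < s)
    (hdim : dimH (Set.univ : Set X) < ENNReal.ofReal s) :
    ∃ C : ℝ, 1 ≤ C ∧ ∀ n : ℕ, ∀ E : Finset X,
      (∀ x ∈ E, ∀ y ∈ E, x ≠ y → ∃ k < n, ε < dist (f^[k] x) (f^[k] y)) →
      (E.card : ℝ) ≤ C * Real.exp (s * Real.log L * n) := by
  classical
  have hL0 : (0 : ℝ) < L := lt_trans one_pos hL1
  have hlogL : 0 < Real.log L := Real.log_pos hL1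
  set a : ℝ := s * Real.log L with hadef
  have hapos : 0 < a := by positivity
  have hεs : 0 < ε ^ s := Real.rpow_pos_of_pos hε _
  obtain ⟨F, V, D, hcov, hDpos, hDle, hdistV, hsumD⟩ := cover_data hs hε hL1 hdim
  -- the separation times m i
  set m : ℕ → ℕ := fun i => ⌈Real.log (ε / D i) / Real.log L⌉₊ with hmdef
  have hratio : ∀ i, (L : ℝ) ≤ ε / D i := by
    intro i
    rw [le_div_iff₀ (hDpos i)]
    have := hDle i
    calc (L : ℝ) * D i ≤ (L : ℝ) * (ε / L) :=
      mul_le_mul_of_nonneg_left this hL0.le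
    _ = ε := by field_simp
  have hlogratio : ∀ i, Real.log L ≤ Real.log (ε / D i) := by
    intro i
    exact Real.log_le_log hL0 (hratio i)
  have hm1 : ∀ i, 1 ≤ m i := by
    intro i
    rw [hmdef]
    exact Nat.one_le_ceil_iff.2 (div_pos (lt_of_lt_of_le hlogL (hlogratio i)) hlogL)
  -- upper: L ^ (m i - 1) * D i ≤ ε
  have hmupper : ∀ i, (L : ℝ) ^ (m i - 1) * D i ≤ ε := by
    intro i
    have hDp := hDpos i
    have harg : 0 ≤ Real.log (ε / D i) / Real.log L :=
      (div_pos (lt_of_lt_of_le hlogL (hlogratio i)) hlogL).le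
    have hceil : ((m i : ℝ)) < Real.log (ε / D i) / Real.log L + 1 := by
      rw [hmdef]; exact Nat.ceil_lt_add_one harg
    have hexp : ((m i - 1 : ℕ) : ℝ) ≤ Real.log (ε / D i) / Real.log L := by
      have h1 : ((m i - 1 : ℕ) : ℝ) = (m i : ℝ) - 1 := by
        have := hm1 i; push_cast [Nat.cast_sub this]; ring
      rw [h1]; linarith
    have hrpow : (L : ℝ) ^ ((m i - 1 : ℕ) : ℝ) ≤ (L : ℝ) ^ (Real.log (ε / D i) / Real.log L) :=
      Real.rpow_le_rpow_of_exponent_le hL1.le hexp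
    have hval : (L : ℝ) ^ (Real.log (ε / D i) / Real.log L) = ε / D i := by
      rw [Real.rpow_def_of_pos hL0]
      have hq : Real.log (L : ℝ) * (Real.log (ε / D i) / Real.log L) = Real.log (ε / D i) := by
        field_simp
      rw [hq, Real.exp_log (div_pos hε (hDpos i))]
    rw [Real.rpow_natCast] at hrpow
    rw [hval] at hrpow
    calc (L : ℝ) ^ (m i - 1) * D i ≤ (ε / D i) * D i :=
      mul_le_mul_of_nonneg_right hrpow (hDpos i).le
    _ = ε := by field_simp
  -- lower: exp (-(a * m i)) ≤ D i ^ s / ε ^ s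
  have hmlower : ∀ i, Real.exp (-(a * m i)) ≤ (D i) ^ s / ε ^ s := by
    intro i
    have hle : Real.log (ε / D i) / Real.log L ≤ (m i : ℝ) := by
      rw [hmdef]; exact Nat.le_ceil _
    have h1 : Real.log (ε / D i) ≤ (m i : ℝ) * Real.log L := by
      rw [div_le_iff₀ hlogL] at hle; linarith
    -- ε / D i ≤ L ^ m i
    have h2 : ε / D i ≤ (L : ℝ) ^ (m i : ℝ) := by
      rw [Real.rpow_def_of_pos hL0]
      calc ε / D i = Real.exp (Real.log (ε / D i)) :=
        (Real.exp_log (div_pos hε (hDpos i))).symm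
      _ ≤ Real.exp ((m i : ℝ) * Real.log L) := Real.exp_le_exp.2 h1
      _ = Real.exp (Real.log (L : ℝ) * (m i : ℝ)) := by ring_nf
    -- so ε ≤ D i * L ^ m i, hence ε * L⁻^m ≤ D i
    have hp : (0 : ℝ) < (L : ℝ) ^ (m i : ℝ) := Real.rpow_pos_of_pos hL0 _
    have h3 : ε * ((L : ℝ) ^ (m i : ℝ))⁻¹ ≤ D i := by
      rw [div_le_iff₀ (hDpos i)] at h2
      calc ε * ((L : ℝ) ^ (m i : ℝ))⁻¹
          ≤ ((L : ℝ) ^ (m i : ℝ) * D i) * ((L : ℝ) ^ (m i : ℝ))⁻¹ :=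
            mul_le_mul_of_nonneg_right h2 (by positivity)
        _ = D i := by field_simp
    -- raise to power s
    have h4 : (ε * ((L : ℝ) ^ (m i : ℝ))⁻¹) ^ s ≤ (D i) ^ s := by
      refine Real.rpow_le_rpow (by positivity) h3 hs.le
    have h5 : (ε * ((L : ℝ) ^ (m i : ℝ))⁻¹) ^ s = ε ^ s * Real.exp (-(a * m i)) := by
      rw [Real.mul_rpow hε.le (by positivity)]
      congr 1
      rw [← Real.rpow_neg hL0.le, ← Real.rpow_mul hL0.le, Real.rpow_def_of_pos hL0, hadef]
      congr 1
      ring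
    rw [h5] at h4
    rw [le_div_iff₀ hεs]
    linarith [h4]
  -- weights sum
  have hw : ∑ i ∈ F, Real.exp (-(a * m i)) ≤ 1 / 2 := by
    calc ∑ i ∈ F, Real.exp (-(a * m i)) ≤ ∑ i ∈ F, (D i) ^ s / ε ^ s :=
          Finset.sum_le_sum (fun i _ => hmlower i)
      _ = (∑ i ∈ F, (D i) ^ s) / ε ^ s := by rw [Finset.sum_div]
      _ ≤ (ε ^ s / 2) / ε ^ s := by
          exact div_le_div_of_nonneg_right hsumD hεs.le
      _ = 1 / 2 := by
          rw [div_div, mul_comm, ← div_div, div_self hεs.ne']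
  -- no two points of V i are (m i)-separated before time m i
  have hP1 : ∀ i, ∀ x ∈ V i, ∀ y ∈ V i, ∀ k, k < m i →
      dist (f^[k] x) (f^[k] y) ≤ ε := by
    intro i x hx y hy k hk
    calc dist (f^[k] x) (f^[k] y) ≤ (L : ℝ) ^ k * dist x y := dist_iterate_le hL k x y
      _ ≤ (L : ℝ) ^ (m i - 1) * dist x y := by
          apply mul_le_mul_of_nonneg_right _ dist_nonneg
          exact pow_le_pow_right₀ hL1.le (by omega)
      _ ≤ (L : ℝ) ^ (m i - 1) * D i := by
          apply mul_le_mul_of_nonneg_left (hdistV i x hx y hy) (by positivity)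
      _ ≤ ε := hmupper i
  -- uniform packing bounds for small n
  have hpack : ∀ n : ℕ, ∃ B : ℕ, ∀ E : Finset X,
      (∀ x ∈ E, ∀ y ∈ E, x ≠ y → ∃ k < n, ε < dist (f^[k] x) (f^[k] y)) → E.card ≤ B := by
    intro n
    have hρ : (0:ℝ) < ε / (L : ℝ) ^ n := by positivity
    obtain ⟨B, hB⟩ := packing_bound (X := X) hρ
    refine ⟨B, fun E hE => hB E ?_⟩
    intro x hx y hy hxy
    obtain ⟨k, hk, hd⟩ := hE x hx y hy hxy
    have h1 : dist (f^[k] x) (f^[k] y) ≤ (L : ℝ) ^ k * dist x y := dist_iterate_le hL k x y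
    have h2 : (L : ℝ) ^ k ≤ (L : ℝ) ^ n := pow_le_pow_right₀ hL1.le hk.le
    have h3 : (0:ℝ) < (L : ℝ) ^ k := by positivity
    rw [div_lt_iff₀ (by positivity)]
    nlinarith [dist_nonneg (x := x) (y := y)]
  choose B hB using hpack
  -- the constant
  set M : ℕ := F.sup m with hMdef
  set C : ℝ := max 1 (((Finset.range (M + 1)).sup B : ℕ) : ℝ) with hCdef
  have hC1 : (1:ℝ) ≤ C := le_max_left _ _
  have hC0 : (0:ℝ) ≤ C := by linarith
  refine ⟨C, hC1, ?_⟩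
  -- choose covering index for each point
  choose ix hixF hixV using hcov
  intro n
  induction n using Nat.strong_induction_on with
  | _ n IH =>
    intro E hE
    have hexp1 : (1:ℝ) ≤ Real.exp (a * n) := by
      rw [Real.one_le_exp_iff]
      positivity
    by_cases hn : n ≤ M
    · -- base case: use packing bound
      have h1 : E.card ≤ B n := hB n E hE
      have h2 : (B n : ℝ) ≤ C := by
        refine le_trans ?_ (le_max_right _ _)
        exact_mod_cast Nat.cast_le.2 (Finset.le_sup (f := B) (Finset.mem_range.2 (by omega)))
      calc (E.card : ℝ) ≤ (B n : ℝ) := by exact_mod_cast h1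
        _ ≤ C := h2
        _ ≤ C * Real.exp (a * n) := le_mul_of_one_le_right hC0 hexp1
    · -- inductive step
      push_neg at hn
      have hn1 : 1 ≤ n := by omega
      have hmn : ∀ i ∈ F, m i < n := fun i hi =>
        lt_of_le_of_lt (Finset.le_sup (f := m) hi) hn
      have hcardeq : E.card = ∑ i ∈ F, (E.filter (fun x => ix x = i)).card :=
        Finset.card_eq_sum_card_fiberwise (fun x _ => hixF x)
      have hfiber : ∀ i ∈ F, ((E.filter (fun x => ix x = i)).card : ℝ) ≤
          C * Real.exp (a * ((n - m i : ℕ) : ℝ)) := by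
        intro i hiF
        set Ei := E.filter (fun x => ix x = i) with hEidef
        have hEiV : ∀ x ∈ Ei, x ∈ V i := by
          intro x hx
          rw [hEidef, Finset.mem_filter] at hx
          rw [← hx.2]
          exact hixV x
        have hEiE : ∀ x ∈ Ei, x ∈ E := fun x hx => (Finset.mem_filter.1 hx).1
        have hksep : ∀ x ∈ Ei, ∀ y ∈ Ei, x ≠ y →
            ∃ k, m i ≤ k ∧ k < n ∧ ε < dist (f^[k] x) (f^[k] y) := by
          intro x hx y hy hxy
          obtain ⟨k, hk, hd⟩ := hE x (hEiE x hx) y (hEiE y hy) hxy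
          refine ⟨k, ?_, hk, hd⟩
          by_contra hlt
          push_neg at hlt
          exact absurd hd (not_lt.2 (hP1 i x (hEiV x hx) y (hEiV y hy) k hlt))
        have hinj : Set.InjOn (f^[m i]) ↑Ei := by
          intro x hx y hy hfeq
          by_contra hxy
          obtain ⟨k, hk1, hk2, hd⟩ := hksep x (by simpa using hx) y (by simpa using hy) hxy
          have : f^[k] x = f^[k] y := by
            have hk3 : k = (k - m i) + m i := by omega
            rw [hk3, Function.iterate_add_apply, Function.iterate_add_apply, hfeq]
          rw [this] at hd
          simp at hd
          linarith
        have himgcard : (Ei.image (f^[m i])).card = Ei.card :=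
          Finset.card_image_of_injOn hinj
        have himgsep : ∀ u ∈ Ei.image (f^[m i]), ∀ v ∈ Ei.image (f^[m i]), u ≠ v →
            ∃ k < n - m i, ε < dist (f^[k] u) (f^[k] v) := by
          intro u hu v hv huv
          obtain ⟨x, hx, rfl⟩ := Finset.mem_image.1 hu
          obtain ⟨y, hy, rfl⟩ := Finset.mem_image.1 hv
          have hxy : x ≠ y := fun h => huv (by rw [h])
          obtain ⟨k, hk1, hk2, hd⟩ := hksep x hx y hy hxy
          refine ⟨k - m i, by omega, ?_⟩
          rw [← Function.iterate_add_apply, ← Function.iterate_add_apply]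
          have : k - m i + m i = k := by omega
          rw [this]
          exact hd
        have := IH (n - m i) (by have := hm1 i; omega) (Ei.image (f^[m i])) himgsep
        rw [himgcard] at this
        exact this
      have hsub : ∀ i ∈ F, ((n - m i : ℕ) : ℝ) = (n : ℝ) - (m i : ℝ) := by
        intro i hi
        have := hmn i hi
        push_cast [Nat.cast_sub (le_of_lt this)]
        ring
      calc (E.card : ℝ) = ∑ i ∈ F, ((E.filter (fun x => ix x = i)).card : ℝ) := by
            rw [hcardeq]; push_cast; ring
        _ ≤ ∑ i ∈ F, C * Real.exp (a * ((n - m i : ℕ) : ℝ)) :=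
            Finset.sum_le_sum hfiber
        _ = ∑ i ∈ F, C * Real.exp (a * n) * Real.exp (-(a * m i)) := by
            refine Finset.sum_congr rfl (fun i hi => ?_)
            have harith : a * ((n : ℝ) - (m i : ℝ)) = a * n + (-(a * m i)) := by ring
            rw [hsub i hi, harith, Real.exp_add, ← mul_assoc]
        _ = C * Real.exp (a * n) * ∑ i ∈ F, Real.exp (-(a * m i)) := by
            rw [← Finset.mul_sum]
        _ ≤ C * Real.exp (a * n) * (1 / 2) := by
            apply mul_le_mul_of_nonneg_left hw (by positivity)
        _ ≤ C * Real.exp (a * n) := by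
            nlinarith [Real.exp_pos (a * n)]

lemma part1 {X : Type*} [MetricSpace X] [CompactSpace X]
    (f : X → X) (L : ℝ≥0) (hL : LipschitzWith L f)
    (U : Set (Set X)) (hU : IsOpenCover U) :
    hLplus f U ≤ ((max (Real.log L) 0 : ℝ) : EReal) := by
  classical
  obtain ⟨δ0, hδ0, hδball⟩ := lebesgue_number_lemma_of_metric_sUnion
    (isCompact_univ : IsCompact (Set.univ : Set X)) hU.1 (by rw [hU.2])
  set δ : ℝ := min δ0 1 with hδdef
  have hδpos : 0 < δ := lt_min hδ0 one_pos
  have hδ1 : δ ≤ 1 := min_le_right _ _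
  have hδ : ∀ x : X, ∃ A ∈ U, Metric.ball x δ ⊆ A := by
    intro x
    obtain ⟨A, hA, hBA⟩ := hδball x (mem_univ x)
    exact ⟨A, hA, (Metric.ball_subset_ball (min_le_left _ _)).trans hBA⟩
  set M : ℝ := max (L : ℝ) 1 with hMdef
  have hM1 : 1 ≤ M := le_max_right _ _
  have hM0 : 0 < M := lt_of_lt_of_le one_pos hM1
  have hLM : (L : ℝ) ≤ M := le_max_left _ _
  -- key lower bound on Lebesgue numbers
  have key : ∀ n : ℕ, 1 ≤ n → ENNReal.ofReal (δ / M ^ (n - 1)) ≤ lebN f U n := by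
    intro n hn
    refine le_sSup ?_
    intro x
    have hAk : ∀ k : Fin n, ∃ A ∈ U, Metric.ball (f^[(k : ℕ)] x) δ ⊆ A := fun k => hδ _
    choose A hAU hAb using hAk
    refine ⟨⋂ k : Fin n, (f^[(k : ℕ)]) ⁻¹' A k, ⟨A, hAU, rfl⟩, ?_⟩
    intro y hy
    change y ∈ eball x _ at hy
    rw [Metric.emetric_ball] at hy
    simp only [Set.mem_iInter, Set.mem_preimage]
    intro k
    refine hAb k ?_
    rw [Metric.mem_ball] at hy ⊢
    have h1 : dist (f^[(k : ℕ)] y) (f^[(k : ℕ)] x) ≤ (L : ℝ) ^ (k : ℕ) * dist y x :=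
      dist_iterate_le hL _ _ _
    have h2 : (L : ℝ) ^ (k : ℕ) ≤ M ^ (n - 1) := by
      calc (L : ℝ) ^ (k : ℕ) ≤ M ^ (k : ℕ) := pow_le_pow_left₀ (by positivity) hLM _
        _ ≤ M ^ (n - 1) := pow_le_pow_right₀ hM1 (by omega)
    have h3 : (0 : ℝ) < M ^ (n - 1) := by positivity
    calc dist (f^[(k : ℕ)] y) (f^[(k : ℕ)] x) ≤ M ^ (n - 1) * dist y x :=
          h1.trans (mul_le_mul_of_nonneg_right h2 dist_nonneg)
      _ < M ^ (n - 1) * (δ / M ^ (n - 1)) := by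
          exact mul_lt_mul_of_pos_left hy h3
      _ = δ := by field_simp
  -- termwise bound
  have hterm : ∀ n : ℕ, 1 ≤ n →
      -Real.log ((lebN f U n).toReal) / n ≤ (-Real.log δ) / n + Real.log M := by
    intro n hn
    have hlogM : 0 ≤ Real.log M := Real.log_nonneg hM1
    have hlogδ : 0 ≤ -Real.log δ := by
      have := Real.log_nonpos hδpos.le hδ1; linarith
    by_cases htop : lebN f U n = ⊤
    · rw [htop]
      simp only [ENNReal.toReal_top, Real.log_zero, neg_zero, zero_div]
      positivity
    · have hlow : δ / M ^ (n - 1) ≤ (lebN f U n).toReal := by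
        have := ENNReal.toReal_mono htop (key n hn)
        rwa [ENNReal.toReal_ofReal (by positivity)] at this
      have hpos : (0 : ℝ) < δ / M ^ (n - 1) := by positivity
      have hlog : -Real.log ((lebN f U n).toReal) ≤ -Real.log (δ / M ^ (n - 1)) := by
        have := Real.log_le_log hpos hlow
        linarith
      have heq : -Real.log (δ / M ^ (n - 1)) = -Real.log δ + (n - 1 : ℕ) * Real.log M := by
        rw [Real.log_div (ne_of_gt hδpos) (by positivity), Real.log_pow]
        ring
      have hnp : (0 : ℝ) < n := by exact_mod_cast hn
      rw [div_add' _ _ _ (ne_of_gt hnp)] at *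
      rw [div_le_div_iff_of_pos_right hnp] at *
      calc -Real.log ((lebN f U n).toReal) ≤ -Real.log δ + (n - 1 : ℕ) * Real.log M := by
            rw [heq] at hlog; exact hlog
        _ ≤ -Real.log δ + Real.log M * n := by
            have : ((n - 1 : ℕ) : ℝ) ≤ (n : ℝ) := by exact_mod_cast Nat.sub_le n 1
            nlinarith
        _ = -Real.log δ + Real.log M * n := rfl
  have hmax : Real.log M = max (Real.log L) 0 := by
    rcases le_total (L : ℝ) 1 with h | h
    · rw [hMdef, max_eq_right h, Real.log_one,
        max_eq_right (Real.log_nonpos (NNReal.coe_nonneg L) h)]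
    · rw [hMdef, max_eq_left h, max_eq_left (Real.log_nonneg h)]
  rw [← hmax]
  exact limsup_coe_le_of_le_add (fun n => -Real.log ((lebN f U n).toReal) / n)
    (-Real.log δ) (Real.log M) hterm

lemma sep_le_bound {X : Type*} [MetricSpace X] (f : X → X) (n : ℕ) (ε : ℝ) (C : ℝ)
    (h : ∀ E : Finset X, (∀ x ∈ E, ∀ y ∈ E, x ≠ y → ∃ k < n, ε < dist (f^[k] x) (f^[k] y)) →
      (E.card : ℝ) ≤ C) :
    (sep f n ε : ℝ) ≤ C + 1 := by
  classical
  have hC0 : (0 : ℝ) ≤ C := le_trans (by simp) (h ∅ (by simp))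
  have hne : {m : ℕ | ∃ E : Finset X, E.card = m ∧
      ∀ x ∈ E, ∀ y ∈ E, x ≠ y → ∃ k < n, ε < dist (f^[k] x) (f^[k] y)}.Nonempty :=
    ⟨0, ∅, by simp⟩
  have hsup : sep f n ε ≤ ⌈C⌉₊ := by
    refine csSup_le hne ?_
    rintro b ⟨E, rfl, hsep⟩
    have := h E hsep
    exact_mod_cast le_trans this (Nat.le_ceil C)
  calc (sep f n ε : ℝ) ≤ (⌈C⌉₊ : ℝ) := by exact_mod_cast hsup
    _ ≤ C + 1 := (Nat.ceil_lt_add_one hC0).le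

lemma limsup_sep_le {X : Type*} [MetricSpace X] [CompactSpace X] (f : X → X) (L : ℝ≥0)
    (hL : LipschitzWith L f) (hL1 : 1 < (L : ℝ)) {ε s : ℝ} (hε : 0 < ε) (hs : 0 < s)
    (hdim : dimH (Set.univ : Set X) < ENNReal.ofReal s) :
    Filter.limsup (fun n : ℕ => ((Real.log (sep f n ε) / n : ℝ) : EReal)) atTop ≤
      ((s * Real.log L : ℝ) : EReal) := by
  obtain ⟨C, hC1, hC⟩ := key2 f L hL hL1 hε hs hdim
  set a : ℝ := s * Real.log L with hadef
  have hlogL : 0 < Real.log L := Real.log_pos hL1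
  have hapos : 0 < a := by positivity
  refine limsup_coe_le_of_le_add _ (Real.log (C + 1) + Real.log 2) a ?_
  intro n hn
  have hnp : (0 : ℝ) < n := by exact_mod_cast hn
  have hexp : (0 : ℝ) < Real.exp (a * n) := Real.exp_pos _
  have hsep : (sep f n ε : ℝ) ≤ C * Real.exp (a * n) + 1 :=
    sep_le_bound f n ε _ (hC n)
  have hsep2 : (sep f n ε : ℝ) ≤ (C + 1) * Real.exp (a * n) := by
    have h1 : (1 : ℝ) ≤ Real.exp (a * n) := by
      rw [Real.one_le_exp_iff]; positivity
    nlinarith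
  have hlog : Real.log (sep f n ε) ≤ Real.log (C + 1) + a * n := by
    rcases Nat.eq_zero_or_pos (sep f n ε) with h0 | hpos
    · rw [h0]
      simp only [Nat.cast_zero, Real.log_zero]
      have : 0 ≤ Real.log (C + 1) := Real.log_nonneg (by linarith)
      positivity
    · have hup : (0 : ℝ) < sep f n ε := by exact_mod_cast hpos
      calc Real.log (sep f n ε) ≤ Real.log ((C + 1) * Real.exp (a * n)) :=
            Real.log_le_log hup hsep2
        _ = Real.log (C + 1) + a * n := by
            rw [Real.log_mul (by linarith) hexp.ne', Real.log_exp]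
  calc Real.log (sep f n ε) / n ≤ (Real.log (C + 1) + a * n) / n :=
        div_le_div_of_nonneg_right hlog hnp.le
    _ = Real.log (C + 1) / n + a := by
        rw [add_div, mul_div_assoc, div_self hnp.ne', mul_one]
    _ ≤ (Real.log (C + 1) + Real.log 2) / n + a := by
        have h2 : (0:ℝ) < Real.log 2 := Real.log_pos (by norm_num)
        have : Real.log (C+1) / n ≤ (Real.log (C+1) + Real.log 2) / n := by
          apply div_le_div_of_nonneg_right _ hnp.le
          linarith
        linarith

lemma part2 {X : Type*} [MetricSpace X] [CompactSpace X] (f : X → X) (L : ℝ≥0)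
    (hL : LipschitzWith L f) (hL1 : 1 < (L : ℝ)) :
    topEnt f ≤ (dimH (Set.univ : Set X) : EReal) * ((Real.log L : ℝ) : EReal) := by
  have hlogL : 0 < Real.log L := Real.log_pos hL1
  rw [topEnt]
  refine iSup₂_le ?_
  intro ε hε
  set dH := dimH (Set.univ : Set X) with hdH
  by_cases htop : dH = ⊤
  · rw [htop]
    rw [show ((⊤ : ℝ≥0∞) : EReal) = (⊤ : EReal) from rfl]
    rw [EReal.top_mul_of_pos (by exact_mod_cast hlogL)]
    exact le_top
  · have hcoe : ((dH : ℝ≥0∞) : EReal) = ((dH.toReal : ℝ) : EReal) := by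
      conv_lhs => rw [← ENNReal.ofReal_toReal htop]
      rw [EReal.coe_ennreal_ofReal, max_eq_left ENNReal.toReal_nonneg]
    rw [hcoe, ← EReal.coe_mul]
    by_contra hcon
    push_neg at hcon
    obtain ⟨r, hr1, hr2⟩ := EReal.exists_between_coe_real hcon
    set s : ℝ := r / Real.log L with hsdef
    have hdr : dH.toReal * Real.log L < r := by exact_mod_cast hr1
    have hslt : dH.toReal < s := by
      rw [hsdef, lt_div_iff₀ hlogL]
      exact hdr
    have hspos : 0 < s := lt_of_le_of_lt ENNReal.toReal_nonneg hslt
    have hdim : dH < ENNReal.ofReal s := by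
      conv_lhs => rw [← ENNReal.ofReal_toReal htop]
      exact (ENNReal.ofReal_lt_ofReal_iff hspos).2 hslt
    have hlim := limsup_sep_le f L hL hL1 hε hspos hdim
    have hsr : s * Real.log L = r := by
      rw [hsdef]; field_simp
    rw [hsr] at hlim
    exact absurd (lt_of_le_of_lt hlim hr2) (lt_irrefl _)

end Aux

/-- For a Lipschitz map `f` with constant `L`, `h_L^+(f,U) ≤ max{log L, 0}` for every
finite open cover `U`; consequently if `L > 1` then `h(f) ≤ dim_H(X) · log L`. -/
theorem hLplus_le_log_lipschitz {X : Type*} [MetricSpace X] [CompactSpace X]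
    (f : X → X) (L : ℝ≥0) (hL : LipschitzWith L f) :
    (∀ U : Set (Set X), IsOpenCover U → U.Finite →
      hLplus f U ≤ ((max (Real.log L) 0 : ℝ) : EReal)) ∧
    (1 < (L : ℝ) →
      topEnt f ≤ (dimH (Set.univ : Set X) : EReal) * ((Real.log L : ℝ) : EReal)) := by
  constructor
  · intro U hU _
    exact part1 f L hL U hU
  · intro hL1
    exact part2 f L hL hL1
end
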